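/- Let f be differentiable and σ-bounded nonconvex, and let g(x) = f(x) + ((σ + θ)/2)‖x − x̄‖². Then for any x, ‖∇f(x)‖² ≤ ‖∇g(x)‖² − θ(σ + θ)‖x − x̄‖² + 2(σ + θ)(f(x̄) − f(x)). -/

import Mathlib

open RealInnerProductSpace

theorem stmt_13 {d : ℕ} (f : EuclideanSpace ℝ (Fin d) → ℝ)
    (f' g' : EuclideanSpace ℝ (Fin d) → EuclideanSpace ℝ (Fin d))
    (σ θ : ℝ) (hσ : 0 < σ) (hθ : 0 < θ)
    (hgrad : ∀ x, HasGradientAt f (f' x) x)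
    (hbnc : ∀ x y, f y - f x ≥ ⟪f' x, y - x⟫ - σ / 2 * ‖y - x‖ ^ 2)
    (xbar : EuclideanSpace ℝ (Fin d))
    (hg' : ∀ x, HasGradientAt (fun y => f y + (σ + θ) / 2 * ‖y - xbar‖ ^ 2) (g' x) x) :
    ∀ x, ‖f' x‖ ^ 2 ≤ ‖g' x‖ ^ 2 - θ * (σ + θ) * ‖x - xbar‖ ^ 2
      + 2 * (σ + θ) * (f xbar - f x) := by
  intro x
  set c : ℝ := σ + θ with hc
  have key : HasGradientAt (fun y => f y + c / 2 * ‖y - xbar‖ ^ 2)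
      (f' x + c • (x - xbar)) x := by
    have h1 := (hgrad x).hasFDerivAt
    have h2 := (((hasFDerivAt_id x).sub_const xbar).norm_sq).const_mul (c / 2)
    have h3 := h1.add h2
    rw [hasGradientAt_iff_hasFDerivAt]
    refine HasFDerivAt.congr_fderiv h3 ?_
    ext y
    simp [inner_add_left, inner_smul_left, real_inner_smul_left]
    ring
  have hge : g' x = f' x + c • (x - xbar) := (hg' x).unique key
  have hns : ‖g' x‖ ^ 2 = ‖f' x‖ ^ 2 + 2 * ⟪f' x, c • (x - xbar)⟫ + ‖c • (x - xbar)‖ ^ 2 := by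
    rw [hge]; exact norm_add_sq_real _ _
  have hip : ⟪f' x, c • (x - xbar)⟫ = c * ⟪f' x, x - xbar⟫ := real_inner_smul_right _ _ _
  have hnsm : ‖c • (x - xbar)‖ ^ 2 = c ^ 2 * ‖x - xbar‖ ^ 2 := by
    rw [norm_smul, mul_pow, Real.norm_eq_abs, sq_abs]
  have hb := hbnc x xbar
  have hinner : ⟪f' x, xbar - x⟫ = - ⟪f' x, x - xbar⟫ := by
    rw [← inner_neg_right]; congr 1; abel
  have hnn : ‖xbar - x‖ = ‖x - xbar‖ := norm_sub_rev _ _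
  rw [hinner, hnn] at hb
  have hcpos : 0 < c := by positivity
  nlinarith [hb, hcpos, sq_nonneg (‖x - xbar‖)]
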